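/- arXiv:2602.05744 — 3 statements merged into one kernel-verified Lean document; each statement's English description precedes it below -/
import Mathlib

section
/- Let K ≥ 2 be an integer and let α ∈ ℝ with α ≠ 2. Then there is no constant C > 0 such that D_α(p‖q) ≥ C·‖p−q‖₁² for all p, q ∈ (0,∞)^K; equivalently, inf{ D_α(p‖q)/‖p−q‖₁² : p, q ∈ (0,∞)^K, p ≠ q } = 0. -/
open Finset Real

/-- The α-Tsallis entropy on the positive orthant (Shannon for α = 1, Burg for α = 0). -/
noncomputable def tsallis (α : ℝ) {K : ℕ} (p : Fin K → ℝ) : ℝ :=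
  if α = 0 then ∑ k, Real.log (p k)
  else if α = 1 then -∑ k, p k * Real.log (p k)
  else (∑ k, p k ^ α) / (α * (1 - α))

/-- The gradient of the α-Tsallis entropy on the positive orthant. -/
noncomputable def tsallisGrad (α : ℝ) {K : ℕ} (q : Fin K → ℝ) (k : Fin K) : ℝ :=
  if α = 0 then 1 / q k
  else if α = 1 then -(1 + Real.log (q k))
  else -(q k ^ (α - 1)) / (α - 1)

/-- The Bregman divergence D_α of the negative α-Tsallis entropy:
`D_α(p‖q) = -S_α(p) + S_α(q) + ⟨∇S_α(q), p - q⟩`. -/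
noncomputable def breg (α : ℝ) {K : ℕ} (p q : Fin K → ℝ) : ℝ :=
  -tsallis α p + tsallis α q + ∑ k, tsallisGrad α q k * (p k - q k)

/-- The relative interior of the probability simplex Δ^K. -/
def relintSimplex (K : ℕ) : Set (Fin K → ℝ) :=
  {p | (∀ k, 0 < p k ∧ p k < 1) ∧ ∑ k, p k = 1}

/-- The ℓ¹ norm on ℝ^K. -/
noncomputable def l1 {K : ℕ} (x : Fin K → ℝ) : ℝ := ∑ k, |x k|


lemma key0 (x y : ℝ) (hx : 0 < x) (hy : 0 < y) :
    0 ≤ -Real.log x + Real.log y + (1 / y) * (x - y) := by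
  have h := Real.log_le_sub_one_of_pos (show 0 < x / y by positivity)
  rw [Real.log_div hx.ne' hy.ne'] at h
  have : x / y - 1 = (1 / y) * (x - y) := by field_simp
  linarith [this ▸ h]

lemma key1 (x y : ℝ) (hx : 0 < x) (hy : 0 < y) :
    0 ≤ -(-(x * Real.log x)) + -(y * Real.log y) + -(1 + Real.log y) * (x - y) := by
  have h := Real.log_le_sub_one_of_pos (show 0 < y / x by positivity)
  rw [Real.log_div hy.ne' hx.ne'] at h
  have h2 : x * (Real.log y - Real.log x) ≤ x * (y / x - 1) :=
    mul_le_mul_of_nonneg_left h hx.le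
  have h3 : x * (y / x - 1) = y - x := by field_simp
  nlinarith

lemma keyg (α x y : ℝ) (hx : 0 < x) (hy : 0 < y) (h0 : α ≠ 0) (h1 : α ≠ 1) :
    0 ≤ -(x ^ α / (α * (1 - α))) + y ^ α / (α * (1 - α)) +
      (-(y ^ (α - 1)) / (α - 1)) * (x - y) := by
  set g : ℝ := -(x ^ α / (α * (1 - α))) + y ^ α / (α * (1 - α)) +
      (-(y ^ (α - 1)) / (α - 1)) * (x - y) with hg
  have hxy : (0:ℝ) < x / y := by positivity
  have hrx : x ^ α = y ^ α * (x / y) ^ α := by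
    rw [Real.div_rpow hx.le hy.le]
    field_simp [(Real.rpow_pos_of_pos hy α).ne']
  have hy1 : y ^ (α - 1) = y ^ α / y := by
    rw [Real.rpow_sub hy, Real.rpow_one]
  have hypos : 0 < y ^ α := Real.rpow_pos_of_pos hy α
  have hα1 : α - 1 ≠ 0 := sub_ne_zero.mpr h1
  have hα1' : (1:ℝ) - α ≠ 0 := by intro h; exact h1 (by linarith [sub_eq_zero.mp h])
  have key : g * (α * (α - 1)) = y ^ α * ((x / y) ^ α - 1 - α * (x / y - 1)) := by
    rw [hg, hrx, hy1]
    set r : ℝ := (x / y) ^ α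
    set Y : ℝ := y ^ α
    field_simp
    ring
  have hB1 : 1 < α ∨ α < 0 → 0 ≤ (x / y) ^ α - 1 - α * (x / y - 1) := by
    rintro (hgt | hlt)
    · have := one_add_mul_self_le_rpow_one_add (s := x / y - 1) (by linarith) hgt.le
      have e : 1 + (x / y - 1) = x / y := by ring
      rw [e] at this; linarith
    · have he : Real.exp (Real.log (x / y) * α) = (x / y) ^ α :=
        (Real.rpow_def_of_pos hxy α).symm
      have h2 := Real.add_one_le_exp (Real.log (x / y) * α)
      have h3 := Real.log_le_sub_one_of_pos hxy
      nlinarith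
  rcases lt_trichotomy α 0 with hlt | heq | hgt
  · have hB := hB1 (Or.inr hlt)
    have hc : 0 < α * (α - 1) := by nlinarith
    have hgc : 0 ≤ g * (α * (α - 1)) := key ▸ mul_nonneg hypos.le hB
    have := div_nonneg hgc hc.le
    rwa [mul_div_cancel_right₀ _ hc.ne'] at this
  · exact absurd heq h0
  · rcases lt_trichotomy α 1 with hlt1 | heq1 | hgt1
    · have hB := rpow_one_add_le_one_add_mul_self (s := x / y - 1) (by linarith) hgt.le hlt1.le
      have e : 1 + (x / y - 1) = x / y := by ring
      rw [e] at hB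
      have hc : α * (α - 1) < 0 := by nlinarith
      have hB' : (x / y) ^ α - 1 - α * (x / y - 1) ≤ 0 := by linarith
      have hgc : g * (α * (α - 1)) ≤ 0 := key ▸ mul_nonpos_of_nonneg_of_nonpos hypos.le hB'
      have := div_nonneg_of_nonpos hgc hc.le
      rwa [mul_div_cancel_right₀ _ hc.ne] at this
    · exact absurd heq1 h1
    · have hB := hB1 (Or.inl hgt1)
      have hc : 0 < α * (α - 1) := by nlinarith
      have hgc : 0 ≤ g * (α * (α - 1)) := key ▸ mul_nonneg hypos.le hB
      have := div_nonneg hgc hc.le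
      rwa [mul_div_cancel_right₀ _ hc.ne'] at this

lemma breg_nonneg (α : ℝ) {K : ℕ} (p q : Fin K → ℝ) (hp : ∀ k, 0 < p k)
    (hq : ∀ k, 0 < q k) : 0 ≤ breg α p q := by
  by_cases hα0 : α = 0
  · have e : breg α p q =
        ∑ k, (-Real.log (p k) + Real.log (q k) + (1 / q k) * (p k - q k)) := by
      simp [breg, tsallis, tsallisGrad, hα0, Finset.sum_add_distrib, Finset.sum_neg_distrib]
    rw [e]
    exact Finset.sum_nonneg fun k _ => key0 _ _ (hp k) (hq k)
  · by_cases hα1 : α = 1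
    · have e : breg α p q =
          ∑ k, (-(-(p k * Real.log (p k))) + -(q k * Real.log (q k))
            + -(1 + Real.log (q k)) * (p k - q k)) := by
        simp [breg, tsallis, tsallisGrad, hα0, hα1, Finset.sum_add_distrib,
          Finset.sum_neg_distrib]
      rw [e]
      exact Finset.sum_nonneg fun k _ => key1 _ _ (hp k) (hq k)
    · have e : breg α p q =
          ∑ k, (-(p k ^ α / (α * (1 - α))) + q k ^ α / (α * (1 - α))
            + (-(q k ^ (α - 1)) / (α - 1)) * (p k - q k)) := by
        simp [breg, tsallis, tsallisGrad, hα0, hα1, Finset.sum_add_distrib,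
          Finset.sum_neg_distrib, Finset.sum_div, neg_div]
      rw [e]
      exact Finset.sum_nonneg fun k _ => keyg α _ _ (hp k) (hq k) hα0 hα1

lemma breg_const (α : ℝ) (K : ℕ) (t : ℝ) (ht : 0 < t) :
    breg α (fun _ : Fin K => t) (fun _ => 2 * t)
      = breg α (fun _ : Fin K => (1 : ℝ)) (fun _ => 2) * t ^ α := by
  by_cases hα0 : α = 0
  · subst hα0
    simp only [breg, tsallis, tsallisGrad, if_pos rfl, Real.rpow_zero, mul_one]
    simp [Finset.sum_const, Real.log_mul two_ne_zero ht.ne']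
    exact Or.inl (by field_simp)
  · by_cases hα1 : α = 1
    · subst hα1
      simp only [breg, tsallis, tsallisGrad, if_neg hα0, if_neg one_ne_zero, if_pos rfl,
        Real.rpow_one]
      simp [Finset.sum_const, Real.log_mul two_ne_zero ht.ne']
      ring
    · have hα1' : α - 1 ≠ 0 := sub_ne_zero.mpr hα1
      have hαm : α * (1 - α) ≠ 0 := by
        intro h
        rcases mul_eq_zero.mp h with h | h
        · exact hα0 h
        · exact hα1 (by linarith [sub_eq_zero.mp h])
      simp only [breg, tsallis, tsallisGrad, if_neg hα0, if_neg hα1]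
      rw [Real.mul_rpow (by norm_num) ht.le, Real.mul_rpow (by norm_num) ht.le]
      have h4 : (1:ℝ) ^ α = 1 := Real.one_rpow α
      rw [show t ^ (α - 1) = t ^ α / t from by rw [Real.rpow_sub ht, Real.rpow_one]]
      simp only [Finset.sum_const, Finset.card_univ, Fintype.card_fin, nsmul_eq_mul, h4]
      field_simp

lemma l1_const (K : ℕ) (t : ℝ) (ht : 0 < t) :
    l1 ((fun _ : Fin K => t) - fun _ => 2 * t) = K * t := by
  simp [l1, Pi.sub_apply, abs_of_nonpos (by linarith : t - 2 * t ≤ 0), Finset.sum_const]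
  ring


theorem no_pinsker_on_orthant (K : ℕ) (hK : 2 ≤ K) (α : ℝ) (hα : α ≠ 2) :
    (¬ ∃ C > (0 : ℝ), ∀ p q : Fin K → ℝ, (∀ k, 0 < p k) → (∀ k, 0 < q k) →
        breg α p q ≥ C * (l1 (p - q)) ^ 2) ∧
    sInf {r : ℝ | ∃ p q : Fin K → ℝ, (∀ k, 0 < p k) ∧ (∀ k, 0 < q k) ∧ p ≠ q ∧
        r = breg α p q / (l1 (p - q)) ^ 2} = 0 := by
  have hK0 : 0 < K := by omega
  have hKpos : (0:ℝ) < (K:ℝ) := by exact_mod_cast hK0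
  have hsub : α - 2 ≠ 0 := sub_ne_zero.mpr hα
  set c : ℝ := breg α (fun _ : Fin K => (1:ℝ)) (fun _ => 2) with hcdef
  have hc : 0 ≤ c := breg_nonneg α _ _ (fun _ => one_pos) (fun _ => two_pos)
  have hc1 : (0:ℝ) < c + 1 := by linarith
  have ratio_eq : ∀ t : ℝ, 0 < t →
      breg α (fun _ : Fin K => t) (fun _ => 2 * t) /
        (l1 ((fun _ : Fin K => t) - fun _ => 2 * t)) ^ 2 = c * t ^ (α - 2) / (K:ℝ) ^ 2 := by
    intro t ht
    rw [breg_const α K t ht, l1_const K t ht]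
    have ht2 : t ^ α = t ^ (α - 2) * t ^ (2:ℕ) := by
      rw [← Real.rpow_natCast t 2, ← Real.rpow_add ht]
      norm_num
    rw [ht2, mul_pow]
    have hK2 : ((K:ℝ)) ^ 2 ≠ 0 := by positivity
    have ht2' : t ^ (2:ℕ) ≠ 0 := by positivity
    field_simp
    ring
  have tchoice : ∀ x : ℝ, 0 < x → ∃ t : ℝ, 0 < t ∧ t ^ (α - 2) = x := by
    intro x hx
    refine ⟨x ^ (α - 2)⁻¹, Real.rpow_pos_of_pos hx _, ?_⟩
    rw [← Real.rpow_mul hx.le, inv_mul_cancel₀ hsub, Real.rpow_one]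
  constructor
  · rintro ⟨C, hCpos, h⟩
    have hx : (0:ℝ) < C * (K:ℝ) ^ 2 / (c + 1) := by positivity
    obtain ⟨t, ht, htv⟩ := tchoice _ hx
    have hh := h (fun _ => t) (fun _ => 2 * t) (fun _ => ht) (fun _ => by show (0:ℝ) < 2 * t; linarith)
    rw [breg_const α K t ht, l1_const K t ht] at hh
    have ht2 : t ^ α = t ^ (α - 2) * t ^ (2:ℕ) := by
      rw [← Real.rpow_natCast t 2, ← Real.rpow_add ht]
      norm_num
    have e1 : c * t ^ α = c * (C * (K:ℝ) ^ 2 / (c + 1)) * t ^ (2:ℕ) := by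
      rw [ht2, htv]; ring
    rw [e1, mul_pow] at hh
    have ht2pos : (0:ℝ) < t ^ (2:ℕ) := by positivity
    have h6 : C * (K:ℝ) ^ 2 ≤ c * (C * (K:ℝ) ^ 2 / (c + 1)) := by
      have h7 : C * (K:ℝ) ^ 2 * t ^ (2:ℕ) ≤ c * (C * (K:ℝ) ^ 2 / (c + 1)) * t ^ (2:ℕ) := by
        calc C * (K:ℝ) ^ 2 * t ^ (2:ℕ) = C * ((K:ℝ) ^ 2 * t ^ (2:ℕ)) := by ring
        _ ≤ _ := hh
      exact le_of_mul_le_mul_right h7 ht2pos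
    have h8 : c * (C * (K:ℝ) ^ 2 / (c + 1)) * (c + 1) = c * (C * (K:ℝ) ^ 2) := by
      field_simp
    nlinarith [mul_pos hCpos (pow_pos hKpos 2)]
  · apply le_antisymm
    · apply le_of_forall_pos_le_add
      intro ε hε
      have hx : (0:ℝ) < ε * (K:ℝ) ^ 2 / (c + 1) := by positivity
      obtain ⟨t, ht, htv⟩ := tchoice _ hx
      have hne : (fun _ : Fin K => t) ≠ fun _ => 2 * t := by
        intro h
        have := congrFun h ⟨0, hK0⟩
        linarith
      have hmem : breg α (fun _ : Fin K => t) (fun _ => 2 * t) /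
          (l1 ((fun _ : Fin K => t) - fun _ => 2 * t)) ^ 2 ∈
          {r : ℝ | ∃ p q : Fin K → ℝ, (∀ k, 0 < p k) ∧ (∀ k, 0 < q k) ∧ p ≠ q ∧
            r = breg α p q / (l1 (p - q)) ^ 2} :=
        ⟨fun _ => t, fun _ => 2 * t, fun _ => ht, fun _ => by show (0:ℝ) < 2 * t; linarith, hne, rfl⟩
      have hbdd : BddBelow {r : ℝ | ∃ p q : Fin K → ℝ, (∀ k, 0 < p k) ∧ (∀ k, 0 < q k) ∧ p ≠ q ∧
            r = breg α p q / (l1 (p - q)) ^ 2} := by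
        refine ⟨0, ?_⟩
        rintro r ⟨p, q, hp, hq, -, rfl⟩
        exact div_nonneg (breg_nonneg α p q hp hq) (sq_nonneg _)
      have hle := csInf_le hbdd hmem
      have hval : breg α (fun _ : Fin K => t) (fun _ => 2 * t) /
          (l1 ((fun _ : Fin K => t) - fun _ => 2 * t)) ^ 2 = c / (c + 1) * ε := by
        rw [ratio_eq t ht, htv]
        field_simp
      rw [hval] at hle
      have : c / (c + 1) * ε ≤ ε := by
        have h9 : c / (c + 1) ≤ 1 := by
          rw [div_le_one hc1]; linarith
        nlinarith
      linarith
    · exact Real.sInf_nonneg fun r hr => by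
        obtain ⟨p, q, hp, hq, -, rfl⟩ := hr
        exact div_nonneg (breg_nonneg α p q hp hq) (sq_nonneg _)
end

section
/- Let K ≥ 2 be an integer and let α ∈ ℝ with α ∉ {0,1}. For p, q ∈ relint(Δ^K), define the α-Tsallis relative entropy D^TRE_α(p‖q) = Σ_{k=1}^K q_k·f_α(p_k/q_k), where f_α(x) = (x^α − 1)/(α(α−1)). Then: (i) if α < 1 (and α ≠ 0), D_α(p‖q) ≥ D^TRE_α(p‖q); and (ii) if α > 1, D_α(p‖q) ≤ D^TRE_α(p‖q). -/
open Finset Real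

/-- Bernoulli lower bound: for `α < 0` or `1 < α` and `t > 0`, `1 + α(t-1) ≤ t^α`. -/
lemma bern_lower {α t : ℝ} (ht : 0 < t) (h : α < 0 ∨ 1 < α) :
    1 + α * (t - 1) ≤ t ^ α := by
  have hs : (-1 : ℝ) ≤ t - 1 := by linarith
  rcases h with h | h
  · rcases le_or_gt (-1 : ℝ) α with hc | hc
    · -- -1 ≤ α < 0 : use upper Bernoulli for exponent -α ∈ (0,1] on t
      have h1 : t ^ (-α) ≤ 1 + (-α) * (t - 1) := by
        have := rpow_one_add_le_one_add_mul_self (s := t - 1) hs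
          (p := -α) (by linarith) (by linarith)
        simpa using this
      have hM : (0:ℝ) < 1 + (-α) * (t - 1) :=
        lt_of_lt_of_le (rpow_pos_of_pos ht _) h1
      have h2 : (1 + α * (t - 1)) * (1 + (-α) * (t - 1)) ≤ 1 := by
        have e2 : (1 + α * (t - 1)) * (1 + (-α) * (t - 1)) = 1 - (α * (t - 1)) ^ 2 := by
          ring
        rw [e2]
        nlinarith [sq_nonneg (α * (t - 1))]
      have h3 : 1 + α * (t - 1) ≤ (1 + (-α) * (t - 1))⁻¹ := by
        rw [← one_div]
        exact (le_div_iff₀ hM).mpr h2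
      have h4 : (1 + (-α) * (t - 1))⁻¹ ≤ (t ^ (-α))⁻¹ :=
        inv_anti₀ (rpow_pos_of_pos ht _) h1
      have h5 : (t ^ (-α))⁻¹ = t ^ α := by
        rw [← rpow_neg ht.le, neg_neg]
      linarith [h5 ▸ h4]
    · -- α < -1 : use lower Bernoulli for exponent -α > 1 on 1/t
      have hs' : (-1:ℝ) ≤ 1/t - 1 := by
        have : (0:ℝ) < 1/t := by positivity
        linarith
      have h1 : 1 + (-α) * (1/t - 1) ≤ (1 + (1/t - 1)) ^ (-α) :=
        one_add_mul_self_le_rpow_one_add hs' (by linarith)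
      have h2 : (1 + (1/t - 1)) ^ (-α) = t ^ α := by
        have : (1:ℝ) + (1/t - 1) = t⁻¹ := by field_simp; ring
        rw [this, ← rpow_neg_one t, ← rpow_mul ht.le]
        norm_num
      have e : 1 + (-α) * (1/t - 1) = 1 + α * ((t - 1) / t) := by
        field_simp
        ring
      rw [h2, e] at h1
      have h3 : α * (t - 1) ≤ α * ((t - 1) / t) := by
        rw [mul_div_assoc']
        rw [le_div_iff₀ ht]
        nlinarith [mul_nonpos_of_nonpos_of_nonneg h.le (sq_nonneg (t - 1))]
      linarith
  · have h1 := one_add_mul_self_le_rpow_one_add hs h.le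
    simpa using h1

/-- Bernoulli upper bound: for `0 < α < 1` and `t > 0`, `t^α ≤ 1 + α(t-1)`. -/
lemma bern_upper {α t : ℝ} (ht : 0 < t) (h0 : 0 < α) (h1 : α < 1) :
    t ^ α ≤ 1 + α * (t - 1) := by
  have hs : (-1 : ℝ) ≤ t - 1 := by linarith
  have := rpow_one_add_le_one_add_mul_self (s := t - 1) hs h0.le h1.le
  simpa using this

theorem breg_vs_tsallis_relative_entropy (K : ℕ) (hK : 2 ≤ K)
    (α : ℝ) (hα0 : α ≠ 0) (hα1 : α ≠ 1)
    (p q : Fin K → ℝ) (hp : p ∈ relintSimplex K) (hq : q ∈ relintSimplex K) :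
    (α < 1 → breg α p q ≥ ∑ k, q k * (((p k / q k) ^ α - 1) / (α * (α - 1)))) ∧
    (1 < α → breg α p q ≤ ∑ k, q k * (((p k / q k) ^ α - 1) / (α * (α - 1)))) := by
  obtain ⟨hpmem, hpsum⟩ := hp
  obtain ⟨hqmem, hqsum⟩ := hq
  have hα1' : α - 1 ≠ 0 := sub_ne_zero.mpr hα1
  have h1mα : (1:ℝ) - α ≠ 0 := fun hE => hα1 (by linarith [sub_eq_zero.mp hE])
  have hd : α - α ^ 2 ≠ 0 := by
    have h := mul_ne_zero hα0 h1mα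
    intro hE
    exact h (by linear_combination hE)
  -- termwise identity
  have hterm : ∀ k : Fin K,
      (q k ^ α - p k ^ α) / (α * (1 - α)) + (-(q k ^ (α - 1)) / (α - 1)) * (p k - q k)
        - q k * (((p k / q k) ^ α - 1) / (α * (α - 1)))
        - ((q k ^ α - q k) * ((p k / q k) ^ α - 1 - α * (p k / q k - 1))) / (α * (α - 1))
      = -((p k - q k) / (α - 1)) := by
    intro k
    have hx := (hpmem k).1
    have hy := (hqmem k).1
    have e1 : (p k / q k) ^ α = p k ^ α / q k ^ α := div_rpow hx.le hy.le α
    have e2 : q k ^ (α - 1) = q k ^ α / q k := by rw [rpow_sub hy, rpow_one]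
    have hyα : q k ^ α ≠ 0 := (rpow_pos_of_pos hy α).ne'
    rw [e1, e2]
    field_simp
    ring
  -- breg as a single sum
  have hbreg : breg α p q = ∑ k, ((q k ^ α - p k ^ α) / (α * (1 - α))
      + (-(q k ^ (α - 1)) / (α - 1)) * (p k - q k)) := by
    simp only [breg, tsallis, tsallisGrad, if_neg hα0, if_neg hα1]
    rw [Finset.sum_add_distrib, ← Finset.sum_div, Finset.sum_sub_distrib]
    ring
  set S := ∑ k, (q k ^ α - q k) * ((p k / q k) ^ α - 1 - α * (p k / q k - 1)) with hS
  have hmain : breg α p q - (∑ k, q k * (((p k / q k) ^ α - 1) / (α * (α - 1))))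
      = S / (α * (α - 1)) := by
    have h1 : breg α p q - (∑ k, q k * (((p k / q k) ^ α - 1) / (α * (α - 1))))
        - S / (α * (α - 1)) = ∑ k, -((p k - q k) / (α - 1)) := by
      rw [hbreg, hS, Finset.sum_div, ← Finset.sum_sub_distrib, ← Finset.sum_sub_distrib]
      exact Finset.sum_congr rfl fun k _ => hterm k
    have h2 : ∑ k, -((p k - q k) / (α - 1)) = 0 := by
      have e : ∑ k, -((p k - q k) / (α - 1)) = (∑ k, (q k - p k)) / (α - 1) := by
        rw [Finset.sum_div]
        exact Finset.sum_congr rfl fun k _ => by ring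
      rw [e, Finset.sum_sub_distrib, hpsum, hqsum]
      simp
    linarith [h1, h2]
  constructor
  · intro hlt
    rw [ge_iff_le, ← sub_nonneg, hmain]
    have hd0 : ∀ k : Fin K, 0 ≤ q k ^ α - q k := by
      intro k
      have h := rpow_lt_rpow_of_exponent_gt (hqmem k).1 (hqmem k).2 hlt
      rw [rpow_one] at h
      linarith
    rcases lt_or_gt_of_ne hα0 with hneg | hpos
    · apply div_nonneg
      · apply Finset.sum_nonneg
        intro k _
        apply mul_nonneg (hd0 k)
        have ht : 0 < p k / q k := div_pos (hpmem k).1 (hqmem k).1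
        have := bern_lower ht (Or.inl hneg)
        linarith
      · nlinarith
    · rw [div_nonneg_iff]
      refine Or.inr ⟨?_, by nlinarith⟩
      apply Finset.sum_nonpos
      intro k _
      apply mul_nonpos_of_nonneg_of_nonpos (hd0 k)
      have ht : 0 < p k / q k := div_pos (hpmem k).1 (hqmem k).1
      have := bern_upper ht hpos hlt
      linarith
  · intro hgt
    rw [← sub_nonpos, hmain]
    rw [div_nonpos_iff]
    refine Or.inr ⟨?_, by nlinarith⟩
    apply Finset.sum_nonpos
    intro k _
    have hd0 : q k ^ α - q k ≤ 0 := by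
      have h := rpow_lt_rpow_of_exponent_gt (hqmem k).1 (hqmem k).2 hgt
      rw [rpow_one] at h
      linarith
    apply mul_nonpos_of_nonpos_of_nonneg hd0
    have ht : 0 < p k / q k := div_pos (hpmem k).1 (hqmem k).1
    have := bern_lower ht (Or.inr hgt)
    linarith
end

section
/- Let K ≥ 3 be an integer, let α > 2, and let 0 < ε < 1/K. Define C_{2,K} = 1/K if K is even and C_{2,K} = K/(K²−1) if K is odd. Then for all p, q ∈ relint(Δ^K) it holds that D_α(p‖q) ≥ (C_{2,K}/2)·(min_{k∈[K]} min{p_k, q_k})^{α−2}·‖p−q‖₁². In particular, if p_k ≥ ε and q_k ≥ ε for every k ∈ [K], then D_α(p‖q) ≥ (ε^{α−2}/2)·C_{2,K}·‖p−q‖₁². -/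
open Finset Real

lemma pointwise_bound (α : ℝ) (hα : 2 < α) (c p q : ℝ) (hc : 0 < c)
    (hcp : c ≤ p) (hcq : c ≤ q) :
    c ^ (α - 2) / 2 * (p - q) ^ 2 ≤
      p ^ α / (α * (α - 1)) - q ^ α / (α * (α - 1)) - q ^ (α - 1) / (α - 1) * (p - q) := by
  have hα0 : α ≠ 0 := by linarith
  have hα1 : α - 1 ≠ 0 := by intro h; nlinarith [h]
  set F : ℝ → ℝ := fun t => p ^ α / (α * (α - 1)) - t ^ α / (α * (α - 1))
      - t ^ (α - 1) / (α - 1) * (p - t) - c ^ (α - 2) / 2 * (p - t) ^ 2 with hFdef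
  have hF : ∀ t : ℝ, 0 < t →
      HasDerivAt F ((c ^ (α - 2) - t ^ (α - 2)) * (p - t)) t := by
    intro t ht
    have h1 : HasDerivAt (fun t : ℝ => t ^ α) (α * t ^ (α - 1)) t :=
      Real.hasDerivAt_rpow_const (Or.inl ht.ne')
    have h2 : HasDerivAt (fun t : ℝ => t ^ (α - 1)) ((α - 1) * t ^ (α - 1 - 1)) t :=
      Real.hasDerivAt_rpow_const (Or.inl ht.ne')
    have hid : HasDerivAt (fun t : ℝ => p - t) (-1) t := (hasDerivAt_id t).const_sub p
    have h3 : HasDerivAt (fun t : ℝ => t ^ (α - 1) / (α - 1) * (p - t))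
        ((α - 1) * t ^ (α - 1 - 1) / (α - 1) * (p - t) + t ^ (α - 1) / (α - 1) * (-1)) t :=
      (h2.div_const (α - 1)).mul hid
    have h4 : HasDerivAt (fun t : ℝ => c ^ (α - 2) / 2 * (p - t) ^ 2)
        (c ^ (α - 2) / 2 * (2 * (p - t) ^ 1 * (-1))) t := (hid.pow 2).const_mul _
    have h5 := (((hasDerivAt_const t (p ^ α / (α * (α - 1)))).sub
        (h1.div_const (α * (α - 1)))).sub h3).sub h4
    refine h5.congr_deriv ?_
    have he : α - 1 - 1 = α - 2 := by ring
    rw [he]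
    field_simp
    ring
  have hFp : F p = 0 := by simp [hFdef]
  have key : F p ≤ F q := by
    rcases le_total q p with hqp | hpq
    · have hmono : AntitoneOn F (Set.Icc q p) := by
        apply antitoneOn_of_deriv_nonpos (convex_Icc q p)
        · intro t ht
          exact (hF t (lt_of_lt_of_le hc (hcq.trans ht.1))).continuousAt.continuousWithinAt
        · intro t ht
          rw [interior_Icc] at ht
          exact (hF t (lt_of_lt_of_le hc (hcq.trans ht.1.le))).differentiableAt.differentiableWithinAt
        · intro t ht
          rw [interior_Icc] at ht
          rw [(hF t (lt_of_lt_of_le hc (hcq.trans ht.1.le))).deriv]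
          apply mul_nonpos_iff.2
          refine Or.inr ⟨?_, by linarith [ht.2]⟩
          have : c ^ (α - 2) ≤ t ^ (α - 2) :=
            Real.rpow_le_rpow hc.le (hcq.trans ht.1.le) (by linarith)
          linarith
      exact hmono ⟨le_rfl, hqp⟩ ⟨hqp, le_rfl⟩ hqp
    · have hmono : MonotoneOn F (Set.Icc p q) := by
        apply monotoneOn_of_deriv_nonneg (convex_Icc p q)
        · intro t ht
          exact (hF t (lt_of_lt_of_le hc (hcp.trans ht.1))).continuousAt.continuousWithinAt
        · intro t ht
          rw [interior_Icc] at ht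
          exact (hF t (lt_of_lt_of_le hc (hcp.trans ht.1.le))).differentiableAt.differentiableWithinAt
        · intro t ht
          rw [interior_Icc] at ht
          rw [(hF t (lt_of_lt_of_le hc (hcp.trans ht.1.le))).deriv]
          have h1 : c ^ (α - 2) ≤ t ^ (α - 2) :=
            Real.rpow_le_rpow hc.le (hcp.trans ht.1.le) (by linarith)
          have h2 : p - t ≤ 0 := by linarith [ht.1]
          nlinarith
      exact hmono ⟨le_rfl, hpq⟩ ⟨hpq, le_rfl⟩ hpq
  rw [hFp] at key
  simp only [hFdef] at key
  linarith


set_option maxHeartbeats 1000000 in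
lemma zero_sum_l1_l2 (K : ℕ) (hK : 2 ≤ K) (x : Fin K → ℝ) (hx : ∑ k, x k = 0) :
    (if Even K then 1 / (K : ℝ) else (K : ℝ) / ((K : ℝ) ^ 2 - 1)) * (∑ k, |x k|) ^ 2
      ≤ ∑ k, x k ^ 2 := by
  have hK2 : (2:ℝ) ≤ (K:ℝ) := by exact_mod_cast hK
  have hK0 : (0:ℝ) < K := by linarith
  have hKsq : (1:ℝ) < (K:ℝ) ^ 2 := by nlinarith
  set C : ℝ := if Even K then 1 / (K : ℝ) else (K : ℝ) / ((K : ℝ) ^ 2 - 1) with hCdef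
  have hC0 : 0 ≤ C := by
    rw [hCdef]; split
    · positivity
    · apply div_nonneg hK0.le; linarith
  set S : Finset (Fin K) := Finset.univ.filter (fun k => 0 < x k) with hSdef
  set P : ℝ := ∑ k ∈ S, x k with hPdef
  have hsplit : ∑ k ∈ S, x k + ∑ k ∈ Sᶜ, x k = 0 := by
    rw [Finset.sum_add_sum_compl]; exact hx
  have hPc : ∑ k ∈ Sᶜ, x k = -P := by rw [hPdef]; linarith
  have habs : ∑ k, |x k| = 2 * P := by
    rw [← Finset.sum_add_sum_compl S]
    have e1 : ∑ k ∈ S, |x k| = P := by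
      apply Finset.sum_congr rfl
      intro k hk
      exact abs_of_pos (Finset.mem_filter.1 hk).2
    have e2 : ∑ k ∈ Sᶜ, |x k| = P := by
      have h : ∀ k ∈ Sᶜ, |x k| = -x k := by
        intro k hk
        have : ¬ (0 < x k) := by
          simpa [hSdef] using Finset.mem_compl.1 hk
        exact abs_of_nonpos (by linarith)
      rw [Finset.sum_congr rfl h, Finset.sum_neg_distrib, hPc, neg_neg]
    rw [e1, e2]; ring
  have hQ : ∑ k, x k ^ 2 = ∑ k ∈ S, x k ^ 2 + ∑ k ∈ Sᶜ, x k ^ 2 :=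
    (Finset.sum_add_sum_compl S _).symm
  set a : ℝ := ∑ k ∈ S, x k ^ 2 with hadef
  set b : ℝ := ∑ k ∈ Sᶜ, x k ^ 2 with hbdef
  have ha0 : 0 ≤ a := by rw [hadef]; positivity
  have hb0 : 0 ≤ b := by rw [hbdef]; positivity
  by_cases hP : P = 0
  · rw [habs, hP, hQ]
    simp only [mul_zero]
    nlinarith
  · have hCS1 : P ^ 2 ≤ (#S : ℝ) * a := sq_sum_le_card_mul_sum_sq (s := S) (f := x)
    have hCS2 : P ^ 2 ≤ (#(Sᶜ) : ℝ) * b := by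
      have h := sq_sum_le_card_mul_sum_sq (s := Sᶜ) (f := x)
      rw [hPc] at h
      calc P ^ 2 = (-P) ^ 2 := by ring
        _ ≤ _ := h
    have hSne : 1 ≤ #S := by
      rcases Finset.eq_empty_or_nonempty S with h | h
      · exfalso; apply hP; rw [hPdef, h, Finset.sum_empty]
      · exact Finset.card_pos.2 h
    have hScne : 1 ≤ #(Sᶜ) := by
      rcases Finset.eq_empty_or_nonempty (Sᶜ) with h | h
      · exfalso; apply hP
        have h0 : ∑ k ∈ Sᶜ, x k = 0 := by rw [h, Finset.sum_empty]
        rw [hPc] at h0; linarith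
      · exact Finset.card_pos.2 h
    have hcard : #S + #(Sᶜ) = K := by
      rw [Finset.card_add_card_compl]; simp
    set u : ℝ := (#S : ℝ) with hudef
    set v : ℝ := (#(Sᶜ) : ℝ) with hvdef
    have hu1 : (1:ℝ) ≤ u := by rw [hudef]; exact_mod_cast hSne
    have hv1 : (1:ℝ) ≤ v := by rw [hvdef]; exact_mod_cast hScne
    have huv : u + v = K := by rw [hudef, hvdef]; exact_mod_cast hcard
    have hKey : 4 * C * (u * v) ≤ (K : ℝ) := by
      rw [hCdef]; split
      · -- even case
        have h4 : 4 * (u * v) ≤ (K:ℝ) ^ 2 := by nlinarith [sq_nonneg (u - v)]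
        rw [show 4 * (1 / (K:ℝ)) * (u * v) = 4 * (u * v) / K by ring,
          div_le_iff₀ hK0]
        nlinarith
      · -- odd case
        rename_i hodd
        have hoddK : Odd K := Nat.not_even_iff_odd.1 hodd
        have hne : (#S : ℤ) ≠ (#(Sᶜ) : ℤ) := by
          intro h
          have hnat : #S = #(Sᶜ) := by exact_mod_cast h
          exact (Nat.not_even_iff_odd.2 hoddK) ⟨#S, by omega⟩
        have hz : (1:ℤ) ≤ ((#S : ℤ) - (#(Sᶜ) : ℤ)) ^ 2 := by
          have h0 : (#S : ℤ) - (#(Sᶜ) : ℤ) ≠ 0 := by omega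
          have : 0 < ((#S : ℤ) - (#(Sᶜ) : ℤ)) ^ 2 := by positivity
          omega
        have h1uv : (1:ℝ) ≤ (u - v) ^ 2 := by
          have hcast : (1:ℝ) ≤ (((#S : ℤ) : ℝ) - ((#(Sᶜ) : ℤ) : ℝ)) ^ 2 := by
            exact_mod_cast hz
          rw [hudef, hvdef]
          push_cast at hcast
          convert hcast using 2
        have h4 : 4 * (u * v) ≤ (K:ℝ) ^ 2 - 1 := by nlinarith
        have hd : (0:ℝ) < (K:ℝ) ^ 2 - 1 := by linarith
        rw [show 4 * ((K:ℝ) / ((K:ℝ)^2 - 1)) * (u * v) = (K:ℝ) * (4 * (u * v)) / ((K:ℝ)^2 - 1) by ring,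
          div_le_iff₀ hd]
        nlinarith
    -- assemble
    have hu0 : 0 < u := by linarith
    have hv0 : 0 < v := by linarith
    have huv0 : 0 < u * v := mul_pos hu0 hv0
    have s1 : v * P ^ 2 ≤ v * (u * a) := mul_le_mul_of_nonneg_left hCS1 hv0.le
    have s2 : u * P ^ 2 ≤ u * (v * b) := mul_le_mul_of_nonneg_left hCS2 hu0.le
    have s3 : (u + v) * P ^ 2 ≤ (u * v) * (a + b) := by nlinarith
    have s4 : (4 * C * (u * v)) * P ^ 2 ≤ (u + v) * P ^ 2 := by
      rw [huv]; exact mul_le_mul_of_nonneg_right hKey (sq_nonneg P)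
    have s5 : (C * (2 * P) ^ 2) * (u * v) ≤ (a + b) * (u * v) := by nlinarith
    have s6 : C * (2 * P) ^ 2 ≤ a + b := le_of_mul_le_mul_right s5 huv0
    rw [habs, hQ]; exact s6

theorem clipped_pinsker_alpha_gt_two (K : ℕ) (hK : 3 ≤ K) (α : ℝ) (hα : 2 < α)
    (ε : ℝ) (hε0 : 0 < ε) (hε1 : ε < 1 / (K : ℝ)) :
    (∀ p ∈ relintSimplex K, ∀ q ∈ relintSimplex K,
        breg α p q ≥
          (if Even K then 1 / (K : ℝ) else (K : ℝ) / ((K : ℝ) ^ 2 - 1)) / 2 *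
            (⨅ k, min (p k) (q k)) ^ (α - 2) * (l1 (p - q)) ^ 2) ∧
    (∀ p ∈ relintSimplex K, ∀ q ∈ relintSimplex K,
        (∀ k, ε ≤ p k) → (∀ k, ε ≤ q k) →
        breg α p q ≥
          ε ^ (α - 2) / 2 *
            (if Even K then 1 / (K : ℝ) else (K : ℝ) / ((K : ℝ) ^ 2 - 1)) *
            (l1 (p - q)) ^ 2) := by
  have hα0 : α ≠ 0 := by linarith
  have hα1 : α ≠ 1 := by linarith
  have hα1' : α - 1 ≠ 0 := by intro h; nlinarith
  have hK2 : (2:ℝ) ≤ (K:ℝ) := by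
    have : (3:ℝ) ≤ (K:ℝ) := by exact_mod_cast hK
    linarith
  have hKne : K ≠ 0 := by omega
  haveI : NeZero K := ⟨hKne⟩
  set C : ℝ := if Even K then 1 / (K : ℝ) else (K : ℝ) / ((K : ℝ) ^ 2 - 1) with hCdef
  have hC0 : 0 ≤ C := by
    rw [hCdef]; split
    · positivity
    · apply div_nonneg (by linarith); nlinarith
  have part1 : ∀ p ∈ relintSimplex K, ∀ q ∈ relintSimplex K,
      breg α p q ≥ C / 2 * (⨅ k, min (p k) (q k)) ^ (α - 2) * (l1 (p - q)) ^ 2 := by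
    intro p hp q hq
    obtain ⟨hp01, hpsum⟩ := hp
    obtain ⟨hq01, hqsum⟩ := hq
    set m : ℝ := ⨅ k, min (p k) (q k) with hmdef
    have hbdd : BddBelow (Set.range fun k => min (p k) (q k)) :=
      Set.Finite.bddBelow (Set.finite_range _)
    have hmle : ∀ k, m ≤ min (p k) (q k) := fun k => ciInf_le hbdd k
    have hm0 : 0 < m := by
      have hall : ∀ k, min (p ⟨0, by omega⟩) (q ⟨0, by omega⟩) ≤ min (p k) (q k) → True :=
        fun _ _ => trivial
      obtain ⟨k0, hk0⟩ := Finite.exists_min (fun k => min (p k) (q k))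
      have : min (p k0) (q k0) ≤ m := le_ciInf hk0
      have h0 : 0 < min (p k0) (q k0) := lt_min (hp01 k0).1 (hq01 k0).1
      linarith
    -- rewrite breg as a sum
    have hbreg : breg α p q = ∑ k, (p k ^ α / (α * (α - 1)) - q k ^ α / (α * (α - 1))
        - q k ^ (α - 1) / (α - 1) * (p k - q k)) := by
      simp only [breg, tsallis, tsallisGrad, if_neg hα0, if_neg hα1]
      rw [Finset.sum_sub_distrib, Finset.sum_sub_distrib, ← Finset.sum_div, ← Finset.sum_div]
      have hg : ∑ k, -q k ^ (α - 1) / (α - 1) * (p k - q k)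
          = -∑ k, q k ^ (α - 1) / (α - 1) * (p k - q k) := by
        rw [← Finset.sum_neg_distrib]
        exact Finset.sum_congr rfl fun k _ => by ring
      rw [hg]
      have h1α : (1:ℝ) - α ≠ 0 := by intro h; nlinarith
      field_simp [h1α]
      ring
    have hzero : ∑ k, (p k - q k) = 0 := by
      rw [Finset.sum_sub_distrib, hpsum, hqsum]; ring
    have hl1 : l1 (p - q) = ∑ k, |p k - q k| := by
      simp [l1]
    have hl2 := zero_sum_l1_l2 K (by omega) (fun k => p k - q k) hzero
    rw [← hCdef] at hl2
    have hstep : C / 2 * m ^ (α - 2) * (l1 (p - q)) ^ 2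
        ≤ ∑ k, m ^ (α - 2) / 2 * (p k - q k) ^ 2 := by
      rw [← Finset.mul_sum]
      have hrn : (0:ℝ) ≤ m ^ (α - 2) := Real.rpow_nonneg hm0.le _
      calc C / 2 * m ^ (α - 2) * (l1 (p - q)) ^ 2
          = m ^ (α - 2) / 2 * (C * (∑ k, |p k - q k|) ^ 2) := by rw [hl1]; ring
        _ ≤ m ^ (α - 2) / 2 * ∑ k, (p k - q k) ^ 2 := by
            apply mul_le_mul_of_nonneg_left hl2 (by positivity)
        _ = m ^ (α - 2) / 2 * ∑ k, (p k - q k) ^ 2 := rfl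
    rw [ge_iff_le, hbreg]
    refine le_trans hstep (Finset.sum_le_sum fun k _ => ?_)
    exact pointwise_bound α hα m (p k) (q k) hm0
      ((hmle k).trans (min_le_left _ _)) ((hmle k).trans (min_le_right _ _))
  refine ⟨part1, ?_⟩
  intro p hp q hq hpε hqε
  have h1 := part1 p hp q hq
  set m : ℝ := ⨅ k, min (p k) (q k) with hmdef
  have hεm : ε ≤ m := le_ciInf fun k => le_min (hpε k) (hqε k)
  have hrp : ε ^ (α - 2) ≤ m ^ (α - 2) :=
    Real.rpow_le_rpow hε0.le hεm (by linarith)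
  have hfin : ε ^ (α - 2) / 2 * C * (l1 (p - q)) ^ 2
      ≤ C / 2 * m ^ (α - 2) * (l1 (p - q)) ^ 2 := by
    have hL : (0:ℝ) ≤ (l1 (p - q)) ^ 2 := sq_nonneg _
    nlinarith [mul_le_mul_of_nonneg_right hrp hL, hC0,
      mul_le_mul_of_nonneg_left (mul_le_mul_of_nonneg_right hrp hL) hC0]
  exact le_trans hfin h1
end
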